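/- arXiv:2011.13255 — 2 statements merged into one kernel-verified Lean document; each statement's English description precedes it below -/
import Mathlib

section
/- Suppose there exist k ∈ ℤ⁺, matrices α_ℓ ∈ ℝ^{n×n} (ℓ = 0,…,k) and b_ℓ ∈ ℝ^{n×m} (ℓ = 1,…,k+1) such that f̂^{k+1}(x,0) = Σ_{ℓ=0}^k α_ℓ f̂^ℓ(x,0) for all x, and f̂^ℓ(x,u) = f̂^ℓ(x,0) + b_ℓ u for all (x,u), ℓ = 1,…,k+1. Then for every ℓ ≥ 1 there exists a constant matrix c_ℓ ∈ ℝ^{n×m} such that f̂^ℓ(x,u) = f̂^ℓ(x,0) + c_ℓ u for all (x,u). -/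
open Matrix Finset

def fhat {V U : Type*} [Zero U] (f : V → U → V) : ℕ → V → U → V
  | 0, x, _ => x
  | 1, x, u => f x u
  | (ℓ + 2), x, u => f (fhat f (ℓ + 1) x u) 0

lemma sum_mulVec' {n m : ℕ} {ι : Type*} (s : Finset ι) (A : ι → Matrix (Fin n) (Fin m) ℝ)
    (u : Fin m → ℝ) : (∑ i ∈ s, A i).mulVec u = ∑ i ∈ s, (A i).mulVec u := by
  classical
  induction s using Finset.cons_induction with
  | empty => simp [Matrix.zero_mulVec]
  | cons i s hi ih => rw [Finset.sum_cons, Finset.sum_cons, Matrix.add_mulVec, ih]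

theorem stmt2 {n m k : ℕ} (f : (Fin n → ℝ) → (Fin m → ℝ) → (Fin n → ℝ))
    (α : ℕ → Matrix (Fin n) (Fin n) ℝ) (b : ℕ → Matrix (Fin n) (Fin m) ℝ)
    (h1 : ∀ x, fhat f (k + 1) x 0 = ∑ ℓ ∈ range (k + 1), (α ℓ).mulVec (fhat f ℓ x 0))
    (h2 : ∀ ℓ, 1 ≤ ℓ → ℓ ≤ k + 1 → ∀ x u, fhat f ℓ x u = fhat f ℓ x 0 + (b ℓ).mulVec u) :
    ∀ ℓ, 1 ≤ ℓ → ∃ c : Matrix (Fin n) (Fin m) ℝ,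
      ∀ x u, fhat f ℓ x u = fhat f ℓ x 0 + c.mulVec u := by
  set g : (Fin n → ℝ) → (Fin n → ℝ) := fun y => f y 0 with hg
  have hiter : ∀ j x u, fhat f (j + 1) x u = g^[j] (f x u) := by
    intro j
    induction j with
    | zero => intro x u; simp [fhat]
    | succ j ih =>
      intro x u
      show f (fhat f (j + 1) x u) 0 = g^[j + 1] (f x u)
      rw [ih, Function.iterate_succ_apply']
  have hzero : ∀ j x, fhat f j x 0 = g^[j] x := by
    intro j x
    cases j with
    | zero => rfl
    | succ j => rw [hiter, ← Function.iterate_succ_apply]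
  have hshift : ∀ ℓ t (x : Fin n → ℝ) u, 1 ≤ t →
      fhat f (ℓ + t) x u = g^[ℓ] (fhat f t x u) := by
    intro ℓ t x u ht
    obtain ⟨s, rfl⟩ : ∃ s, t = s + 1 := ⟨t - 1, by omega⟩
    rw [show ℓ + (s + 1) = (ℓ + s) + 1 from by ring, hiter, hiter,
      Function.iterate_add_apply]
  have h1' : ∀ y, g^[k + 1] y = ∑ ℓ ∈ range (k + 1), (α ℓ).mulVec (g^[ℓ] y) := by
    intro y
    have := h1 y
    rw [hzero] at this
    rw [this]
    exact Finset.sum_congr rfl fun j _ => by rw [hzero]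
  intro ℓ
  induction ℓ using Nat.strong_induction_on with
  | _ ℓ ih =>
    intro hℓ
    rcases le_or_gt ℓ (k + 1) with h | h
    · exact ⟨b ℓ, h2 ℓ hℓ h⟩
    · obtain ⟨t, ht, rfl⟩ : ∃ t, 1 ≤ t ∧ ℓ = k + 1 + t := ⟨ℓ - (k + 1), by omega, by omega⟩
      have IH : ∀ j, j < k + 1 → ∃ c : Matrix (Fin n) (Fin m) ℝ,
          ∀ x u, fhat f (j + t) x u = fhat f (j + t) x 0 + c.mulVec u :=
        fun j hj => ih (j + t) (by omega) (by omega)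
      choose c hc using IH
      set cdef : ℕ → Matrix (Fin n) (Fin m) ℝ :=
        fun j => if hj : j < k + 1 then c j hj else 0 with hcdef
      refine ⟨∑ j ∈ range (k + 1), α j * cdef j, fun x u => ?_⟩
      have key : ∀ v, fhat f (k + 1 + t) x v =
          ∑ j ∈ range (k + 1), (α j).mulVec (fhat f (j + t) x v) := by
        intro v
        rw [hshift (k + 1) t x v ht, h1']
        exact Finset.sum_congr rfl fun j _ => by rw [hshift j t x v ht]
      rw [key u, key 0]
      have step : ∀ j ∈ range (k + 1),
          (α j).mulVec (fhat f (j + t) x u) =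
            (α j).mulVec (fhat f (j + t) x 0) + (α j * cdef j).mulVec u := by
        intro j hj
        have hj' : j < k + 1 := Finset.mem_range.mp hj
        rw [hcdef]
        simp only [dif_pos hj']
        rw [hc j hj' x u, Matrix.mulVec_add, Matrix.mulVec_mulVec]
      rw [Finset.sum_congr rfl step, Finset.sum_add_distrib, sum_mulVec']
end

section
/- Suppose there exist k ∈ ℤ⁺, α_ℓ ∈ ℝ^{n×n} (ℓ = 0,…,k) and b_ℓ ∈ ℝ^{n×m} (ℓ = 1,…,k+1) satisfying f̂^{k+1}(x,0) = Σ_{ℓ=0}^k α_ℓ f̂^ℓ(x,0) for all x and f̂^ℓ(x,u) = f̂^ℓ(x,0) + b_ℓ u for all (x,u), ℓ = 1,…,k+1. Define T : ℝⁿ → ℝ^{(k+1)n} by T(x) = (x, f̂^1(x,0), …, f̂^k(x,0)), A the block companion matrix with blocks I_n on the superdiagonal and last block row (α_0, …, α_k), B the stacked matrix (b_1; …; b_{k+1}), and C = [I_n, 0]. Then T(f(x,u)) = A T(x) + B u and C T(x) = x for all (x,u). -/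
open Matrix Finset

/-- The lifting map `T(x) = (x, f̂¹(x,0), …, f̂ᵏ(x,0))`, with block index `p.1`. -/
def Tlift {n m k : ℕ} (f : (Fin n → ℝ) → (Fin m → ℝ) → (Fin n → ℝ))
    (x : Fin n → ℝ) : Fin (k + 1) × Fin n → ℝ :=
  fun p => fhat f p.1 x 0 p.2

/-- Block companion matrix: `I_n` blocks on the superdiagonal, last block row `(α_0,…,α_k)`. -/
def Acomp {n k : ℕ} (α : ℕ → Matrix (Fin n) (Fin n) ℝ) :
    Matrix (Fin (k + 1) × Fin n) (Fin (k + 1) × Fin n) ℝ :=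
  fun p q =>
    if (p.1 : ℕ) < k then (if (q.1 : ℕ) = (p.1 : ℕ) + 1 ∧ q.2 = p.2 then 1 else 0)
    else α q.1 p.2 q.2

/-- Stacked input matrix `B = (b_1; …; b_{k+1})`. -/
def Bstack {n m k : ℕ} (b : ℕ → Matrix (Fin n) (Fin m) ℝ) :
    Matrix (Fin (k + 1) × Fin n) (Fin m) ℝ :=
  fun p r => b ((p.1 : ℕ) + 1) p.2 r

/-- Projection matrix `C = [I_n, 0, …, 0]`. -/
def Cproj {n k : ℕ} : Matrix (Fin n) (Fin (k + 1) × Fin n) ℝ :=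
  fun i q => if (q.1 : ℕ) = 0 ∧ q.2 = i then 1 else 0

lemma fhat_succ {V U : Type*} [Zero U] (f : V → U → V) (ℓ : ℕ) (y : V) :
    fhat f (ℓ + 1) y 0 = f (fhat f ℓ y 0) 0 := by
  cases ℓ <;> rfl

lemma fhat_shift {V U : Type*} [Zero U] (f : V → U → V) (ℓ : ℕ) (x : V) (u : U) :
    fhat f ℓ (f x u) 0 = fhat f (ℓ + 1) x u := by
  induction ℓ with
  | zero => rfl
  | succ ℓ ih =>
    rw [fhat_succ, ih]
    rfl

theorem stmt3 {n m k : ℕ} (f : (Fin n → ℝ) → (Fin m → ℝ) → (Fin n → ℝ))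
    (α : ℕ → Matrix (Fin n) (Fin n) ℝ) (b : ℕ → Matrix (Fin n) (Fin m) ℝ)
    (h1 : ∀ x, fhat f (k + 1) x 0 = ∑ ℓ ∈ range (k + 1), (α ℓ).mulVec (fhat f ℓ x 0))
    (h2 : ∀ ℓ, 1 ≤ ℓ → ℓ ≤ k + 1 → ∀ x u, fhat f ℓ x u = fhat f ℓ x 0 + (b ℓ).mulVec u) :
    ∀ x u,
      Tlift (k := k) f (f x u)
        = (Acomp (k := k) α).mulVec (Tlift (k := k) f x) + (Bstack (k := k) b).mulVec u
      ∧ (Cproj (n := n) (k := k)).mulVec (Tlift (k := k) f x) = x := by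
  intro x u
  constructor
  · funext p
    obtain ⟨i, j⟩ := p
    have hi1 : (i : ℕ) + 1 ≤ k + 1 := Nat.succ_le_succ (Nat.le_of_lt_succ i.isLt)
    have hL : Tlift (k := k) f (f x u) (i, j)
        = fhat f ((i : ℕ) + 1) x 0 j + (b ((i : ℕ) + 1)).mulVec u j := by
      have h := h2 ((i : ℕ) + 1) (Nat.succ_le_succ (Nat.zero_le _)) hi1 x u
      simp only [Tlift, fhat_shift, h, Pi.add_apply]
    rw [hL]
    have hB : (Bstack (k := k) b).mulVec u (i, j) = (b ((i : ℕ) + 1)).mulVec u j := rfl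
    rw [Pi.add_apply, hB]
    congr 1
    rcases lt_or_ge (i : ℕ) k with h | h
    · rw [mulVec, dotProduct]
      rw [Finset.sum_eq_single ((⟨(i : ℕ) + 1, Nat.succ_lt_succ h⟩ : Fin (k + 1)), j)]
      · simp [Acomp, h, Tlift]
      · rintro ⟨l, j'⟩ _ hne
        simp only [Acomp, if_pos h]
        rw [if_neg, zero_mul]
        rintro ⟨hl, hj⟩
        exact hne (by simp [Prod.ext_iff, Fin.ext_iff, hl, hj])
      · intro habs; exact absurd (Finset.mem_univ _) habs
    · have hik : (i : ℕ) = k := le_antisymm (Nat.le_of_lt_succ i.isLt) h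
      have hnot : ¬ (i : ℕ) < k := by omega
      rw [mulVec, dotProduct]
      have : ∑ q : Fin (k + 1) × Fin n, Acomp (k := k) α (i, j) q * Tlift (k := k) f x q
          = ∑ l : Fin (k + 1), ∑ j' : Fin n, α (l : ℕ) j j' * fhat f (l : ℕ) x 0 j' := by
        rw [Fintype.sum_prod_type]
        simp [Acomp, hnot, Tlift]
      rw [this, hik]
      have := congrFun (h1 x) j
      rw [this, Finset.sum_apply]
      rw [← Fin.sum_univ_eq_sum_range (fun ℓ => (α ℓ).mulVec (fhat f ℓ x 0) j)]
      exact Finset.sum_congr rfl fun l _ => by rw [mulVec, dotProduct]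
  · funext i
    rw [mulVec, dotProduct]
    rw [Finset.sum_eq_single ((⟨0, Nat.succ_pos k⟩ : Fin (k + 1)), i)]
    · simp [Cproj, Tlift, fhat]
    · rintro ⟨l, j'⟩ _ hne
      simp only [Cproj]
      rw [if_neg, zero_mul]
      rintro ⟨hl, hj⟩
      exact hne (by simp [Prod.ext_iff, Fin.ext_iff, hl, hj])
    · intro habs; exact absurd (Finset.mem_univ _) habs
end
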